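/- arXiv:2603.03173 — 7 statements merged into one kernel-verified Lean document; each statement's English description precedes it below -/
import Mathlib

section
/- For any vector v in R^n, the inner product v·(σ(v) − σ(−v)) is nonnegative, where σ is the softmax mapping; moreover, equality holds if and only if v = c·1_n for some real constant c. -/
noncomputable def softmax {n : ℕ} (v : Fin n → ℝ) : Fin n → ℝ :=
  fun i => Real.exp (v i) / ∑ j, Real.exp (v j)

lemma key_nonneg (x : ℝ) : 0 ≤ x * (Real.exp x - Real.exp (-x)) := by
  rcases le_or_gt 0 x with h | h
  · exact mul_nonneg h (sub_nonneg.2 (Real.exp_le_exp.2 (by linarith)))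
  · have h1 : Real.exp x ≤ Real.exp (-x) := Real.exp_le_exp.2 (by linarith)
    nlinarith

lemma key_eq (x : ℝ) : x * (Real.exp x - Real.exp (-x)) = 0 ↔ x = 0 := by
  constructor
  · intro h
    rcases mul_eq_zero.1 h with h | h
    · exact h
    · have : Real.exp x = Real.exp (-x) := by linarith
      have := Real.exp_injective this
      linarith
  · rintro rfl; simp

theorem softmax_monotone_odd (n : ℕ) (v : Fin n → ℝ) :
    0 ≤ ∑ i, v i * (softmax v i - softmax (-v) i) ∧
    ((∑ i, v i * (softmax v i - softmax (-v) i)) = 0 ↔ ∃ c : ℝ, v = fun _ => c) := by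
  classical
  rcases Nat.eq_zero_or_pos n with hn | hn
  · subst hn
    refine ⟨by simp, ⟨fun _ => ⟨0, funext fun i => i.elim0⟩, fun _ => by simp⟩⟩
  haveI : Nonempty (Fin n) := ⟨⟨0, hn⟩⟩
  set S := ∑ j, Real.exp (v j) with hSdef
  set T := ∑ j, Real.exp (-v j) with hTdef
  have hS : 0 < S := Finset.sum_pos (fun _ _ => Real.exp_pos _) Finset.univ_nonempty
  have hT : 0 < T := Finset.sum_pos (fun _ _ => Real.exp_pos _) Finset.univ_nonempty
  set A := ∑ i, v i * (softmax v i - softmax (-v) i) with hAdef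
  set B := ∑ i, ∑ j, v i * (Real.exp (v i - v j) - Real.exp (v j - v i)) with hBdef
  set E := ∑ i, ∑ j, (v i - v j) * (Real.exp (v i - v j) - Real.exp (v j - v i)) with hEdef
  have hsm : ∀ i, softmax v i = Real.exp (v i) / S := fun i => rfl
  have hsm' : ∀ i, softmax (-v) i = Real.exp (-v i) / T := fun i => rfl
  have hAB : A * (S * T) = B := by
    rw [hAdef, Finset.sum_mul, hBdef]
    refine Finset.sum_congr rfl fun i _ => ?_
    have expand : ∀ j, v i * (Real.exp (v i - v j) - Real.exp (v j - v i)) =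
        (v i * Real.exp (v i)) * Real.exp (-v j) - (v i * Real.exp (-v i)) * Real.exp (v j) := by
      intro j
      rw [sub_eq_add_neg (v i), sub_eq_add_neg (v j), Real.exp_add, Real.exp_add]
      ring
    rw [Finset.sum_congr rfl fun j _ => expand j, Finset.sum_sub_distrib,
      ← Finset.mul_sum, ← Finset.mul_sum, ← hTdef, ← hSdef, hsm i, hsm' i]
    field_simp
  have hterm : ∀ i j : Fin n, 0 ≤ (v i - v j) * (Real.exp (v i - v j) - Real.exp (v j - v i)) := by
    intro i j
    have := key_nonneg (v i - v j)
    rwa [neg_sub] at this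
  have hE2B : E = 2 * B := by
    have hswap : ∑ i, ∑ j, v j * (Real.exp (v i - v j) - Real.exp (v j - v i)) = -B := by
      rw [Finset.sum_comm]
      have : ∀ a b : Fin n, v a * (Real.exp (v b - v a) - Real.exp (v a - v b)) =
          -(v a * (Real.exp (v a - v b) - Real.exp (v b - v a))) := fun a b => by ring
      simp_rw [this, Finset.sum_neg_distrib]
      rw [hBdef]
    have : E = B - ∑ i, ∑ j, v j * (Real.exp (v i - v j) - Real.exp (v j - v i)) := by
      rw [hEdef, hBdef, ← Finset.sum_sub_distrib]
      refine Finset.sum_congr rfl fun i _ => ?_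
      rw [← Finset.sum_sub_distrib]
      exact Finset.sum_congr rfl fun j _ => by ring
    rw [this, hswap]; ring
  have hEnn : 0 ≤ E :=
    Finset.sum_nonneg fun i _ => Finset.sum_nonneg fun j _ => hterm i j
  have hST : 0 < S * T := mul_pos hS hT
  have hAnn : 0 ≤ A := by
    have h2 : 0 ≤ A * (S * T) := by rw [hAB]; linarith [hE2B, hEnn]
    nlinarith
  refine ⟨hAnn, ?_, ?_⟩
  · intro hA0
    have hB0 : B = 0 := by rw [← hAB, hA0, zero_mul]
    have hE0 : E = 0 := by rw [hE2B, hB0]; ring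
    have hall : ∀ i ∈ (Finset.univ : Finset (Fin n)), ∑ j, (v i - v j) * (Real.exp (v i - v j) - Real.exp (v j - v i)) = 0 :=
      (Finset.sum_eq_zero_iff_of_nonneg (fun i _ => Finset.sum_nonneg fun j _ => hterm i j)).1 hE0
    have hall2 : ∀ i j : Fin n, v i = v j := by
      intro i j
      have h0 := (Finset.sum_eq_zero_iff_of_nonneg (fun j _ => hterm i j)).1
        (hall i (Finset.mem_univ i)) j (Finset.mem_univ j)
      have h1 : (v i - v j) * (Real.exp (v i - v j) - Real.exp (-(v i - v j))) = 0 := by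
        rw [neg_sub]; exact h0
      have := (key_eq (v i - v j)).1 h1
      linarith
    exact ⟨v ⟨0, hn⟩, funext fun i => hall2 i ⟨0, hn⟩⟩
  · rintro ⟨c, rfl⟩
    have hE0 : E = 0 := by
      rw [hEdef]
      refine Finset.sum_eq_zero fun i _ => Finset.sum_eq_zero fun j _ => by simp
    have hB0 : B = 0 := by linarith [hE2B]
    have : A * (S * T) = 0 := by rw [hAB, hB0]
    rcases mul_eq_zero.1 this with h | h
    · exact h
    · exact absurd h (ne_of_gt hST)
end

section
/- For any v in R^n, v·(σ(v) − σ(−v)) = (2/(Z_1 Z_2)) Σ_{1≤j<i≤n} (v_i − v_j) sinh(v_i − v_j), where Z_1 = Σ_j exp(v_j) and Z_2 = Σ_j exp(−v_j). -/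
theorem sum_swap_lt {n : ℕ} (F : Fin n → Fin n → ℝ) :
    ∑ i, ∑ j ∈ Finset.univ.filter (fun j => i < j), F i j
      = ∑ i, ∑ j ∈ Finset.univ.filter (fun j => j < i), F j i := by
  simp only [Finset.sum_filter]
  rw [Finset.sum_comm]

theorem sum_pair {n : ℕ} (F : Fin n → Fin n → ℝ) (hd : ∀ i, F i i = 0) :
    ∑ i, ∑ j, F i j
      = ∑ i, ∑ j ∈ Finset.univ.filter (fun j => j < i), (F i j + F j i) := by
  have hsplit : ∀ i : Fin n,
      (Finset.univ.filter (fun j => ¬ j < i))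
        = insert i (Finset.univ.filter (fun j => i < j)) := by
    intro i
    ext j
    simp only [Finset.mem_filter, Finset.mem_univ, true_and, Finset.mem_insert]
    constructor
    · intro h
      rcases lt_or_eq_of_le (not_lt.mp h) with h' | h'
      · exact Or.inr h'
      · exact Or.inl h'.symm
    · rintro (rfl | h)
      · exact lt_irrefl _
      · exact not_lt.mpr h.le
  have key : ∀ i : Fin n, ∑ j, F i j =
      (∑ j ∈ Finset.univ.filter (fun j => j < i), F i j)
        + ∑ j ∈ Finset.univ.filter (fun j => i < j), F i j := by
    intro i
    rw [← Finset.sum_filter_add_sum_filter_not Finset.univ (fun j => j < i)]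
    congr 1
    rw [hsplit i, Finset.sum_insert (by simp), hd i, zero_add]
  simp only [key, Finset.sum_add_distrib, sum_swap_lt F]

theorem softmax_sinh_identity (n : ℕ) (v : Fin n → ℝ) :
    ∑ i, v i * (softmax v i - softmax (-v) i) =
      (2 / ((∑ j, Real.exp (v j)) * (∑ j, Real.exp (-v j)))) *
        ∑ i, ∑ j ∈ Finset.univ.filter (fun j => j < i),
          (v i - v j) * Real.sinh (v i - v j) := by
  rcases Nat.eq_zero_or_pos n with hn | hn
  · subst hn; simp
  have : Nonempty (Fin n) := Fin.pos_iff_nonempty.mp hn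
  set Z1 := ∑ j, Real.exp (v j) with hZ1
  set Z2 := ∑ j, Real.exp (-v j) with hZ2
  have hZ1pos : 0 < Z1 :=
    Finset.sum_pos (fun j _ => Real.exp_pos _) Finset.univ_nonempty
  have hZ2pos : 0 < Z2 :=
    Finset.sum_pos (fun j _ => Real.exp_pos _) Finset.univ_nonempty
  have key : ∑ i, ∑ j, (v i * (Real.exp (v i - v j) - Real.exp (v j - v i)))
      = ∑ i, ∑ j ∈ Finset.univ.filter (fun j => j < i),
          (2 * ((v i - v j) * Real.sinh (v i - v j))) := by
    rw [sum_pair _ (fun i => by simp)]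
    refine Finset.sum_congr rfl fun i _ => Finset.sum_congr rfl fun j _ => ?_
    rw [Real.sinh_eq, ← neg_sub (v i) (v j), Real.exp_neg]
    have h := Real.exp_ne_zero (v i - v j)
    field_simp
    ring
  have step : ∀ i : Fin n, v i * (softmax v i - softmax (-v) i)
      = (1 / (Z1 * Z2)) * ∑ j, (v i * (Real.exp (v i - v j) - Real.exp (v j - v i))) := by
    intro i
    have hptw : ∀ j, v i * (Real.exp (v i - v j) - Real.exp (v j - v i))
        = (v i * Real.exp (v i)) * Real.exp (-v j)
          - (v i * Real.exp (-v i)) * Real.exp (v j) := by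
      intro j
      rw [sub_eq_add_neg (v i) (v j), Real.exp_add, sub_eq_add_neg (v j) (v i),
        Real.exp_add]
      ring
    have hsum : ∑ j, (v i * (Real.exp (v i - v j) - Real.exp (v j - v i)))
        = v i * (Real.exp (v i) * Z2 - Real.exp (-v i) * Z1) := by
      simp only [hptw, Finset.sum_sub_distrib, ← Finset.mul_sum, ← hZ1, ← hZ2]
      ring
    rw [hsum]
    simp only [softmax, Pi.neg_apply, ← hZ1, ← hZ2]
    rw [div_sub_div _ _ hZ1pos.ne' hZ2pos.ne']
    ring
  calc ∑ i, v i * (softmax v i - softmax (-v) i)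
      = ∑ i, (1 / (Z1 * Z2)) * ∑ j, (v i * (Real.exp (v i - v j) - Real.exp (v j - v i))) :=
        Finset.sum_congr rfl fun i _ => step i
    _ = (1 / (Z1 * Z2)) * ∑ i, ∑ j, (v i * (Real.exp (v i - v j) - Real.exp (v j - v i))) :=
        (Finset.mul_sum _ _ _).symm
    _ = (1 / (Z1 * Z2)) * ∑ i, ∑ j ∈ Finset.univ.filter (fun j => j < i),
          (2 * ((v i - v j) * Real.sinh (v i - v j))) := by rw [key]
    _ = (2 / (Z1 * Z2)) *
        ∑ i, ∑ j ∈ Finset.univ.filter (fun j => j < i),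
          (v i - v j) * Real.sinh (v i - v j) := by
        have h2 : ∑ i, ∑ j ∈ Finset.univ.filter (fun j => j < i),
            (2 * ((v i - v j) * Real.sinh (v i - v j)))
            = 2 * ∑ i, ∑ j ∈ Finset.univ.filter (fun j => j < i),
              ((v i - v j) * Real.sinh (v i - v j)) := by
          rw [Finset.mul_sum]
          exact Finset.sum_congr rfl fun i _ => (Finset.mul_sum _ _ _).symm
        rw [h2]
        ring
end

section
/- The softmax mapping σ: R^n → R^n is (1/2)-Lipschitz with respect to the Euclidean norm: for all u, v in R^n, ‖σ(u+v) − σ(u)‖₂ ≤ (1/2)‖v‖₂. -/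
open Finset

section CovBounds

variable {n : ℕ}

/-- Variance with respect to probability weights `p` is at most half the sum of squares. -/
lemma softmax_var_le (p x : Fin n → ℝ) (hp : ∀ i, 0 ≤ p i) (hs : ∑ i, p i = 1) :
    ∑ i, p i * (x i - ∑ j, p j * x j) ^ 2 ≤ 1 / 2 * ∑ i, x i ^ 2 := by
  have hn : (Finset.univ : Finset (Fin n)).Nonempty := by
    by_contra h
    rw [Finset.not_nonempty_iff_eq_empty] at h
    rw [h, Finset.sum_empty] at hs
    norm_num at hs
  obtain ⟨i0, -, hmax⟩ := Finset.exists_max_image univ x hn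
  obtain ⟨i1, -, hmin⟩ := Finset.exists_min_image univ x hn
  set m := ∑ j, p j * x j with hm
  set c := (x i0 + x i1) / 2 with hc
  have expand : ∀ a : ℝ, ∑ i, p i * (x i - a) ^ 2
      = ∑ i, p i * x i ^ 2 - 2 * a * m + a ^ 2 := by
    intro a
    have h1 : ∀ i ∈ univ, p i * (x i - a) ^ 2
        = p i * x i ^ 2 - 2 * a * (p i * x i) + a ^ 2 * p i := fun i _ => by ring
    rw [Finset.sum_congr rfl h1, Finset.sum_add_distrib, Finset.sum_sub_distrib,
      ← Finset.mul_sum, ← Finset.mul_sum, hs, ← hm]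
    ring
  have hvc : ∑ i, p i * (x i - m) ^ 2 ≤ ∑ i, p i * (x i - c) ^ 2 := by
    rw [expand m, expand c]
    nlinarith [sq_nonneg (m - c)]
  have hb : ∀ i ∈ univ, p i * (x i - c) ^ 2 ≤ p i * ((x i0 - x i1) / 2) ^ 2 := by
    intro i _
    refine mul_le_mul_of_nonneg_left ?_ (hp i)
    have h1 := hmax i (mem_univ i)
    have h2 := hmin i (mem_univ i)
    rw [hc]
    nlinarith
  have hsum : ∑ i, p i * (x i - c) ^ 2 ≤ ((x i0 - x i1) / 2) ^ 2 := by
    calc ∑ i, p i * (x i - c) ^ 2 ≤ ∑ i, p i * ((x i0 - x i1) / 2) ^ 2 :=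
          Finset.sum_le_sum hb
      _ = ((x i0 - x i1) / 2) ^ 2 := by rw [← Finset.sum_mul, hs, one_mul]
  by_cases hii : i0 = i1
  · have h0 : (0:ℝ) ≤ ∑ i, x i ^ 2 := Finset.sum_nonneg fun i _ => sq_nonneg _
    have : ((x i0 - x i1) / 2) ^ 2 = 0 := by rw [hii]; ring
    linarith
  · have hsub : x i0 ^ 2 + x i1 ^ 2 ≤ ∑ i, x i ^ 2 := by
      have h := Finset.sum_le_sum_of_subset_of_nonneg
        (Finset.subset_univ ({i0, i1} : Finset (Fin n)))
        (fun i _ _ => sq_nonneg (x i))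
      rwa [Finset.sum_pair hii] at h
    nlinarith [sq_nonneg (x i0 + x i1)]

/-- Covariance bound: `Cov_p(x, y) ≤ (1/2)‖x‖‖y‖`. -/
lemma softmax_cov_le (p x y : Fin n → ℝ) (hp : ∀ i, 0 ≤ p i) (hs : ∑ i, p i = 1) :
    ∑ i, p i * (x i - ∑ j, p j * x j) * y i ≤
      1 / 2 * Real.sqrt (∑ i, x i ^ 2) * Real.sqrt (∑ i, y i ^ 2) := by
  set mx := ∑ j, p j * x j with hmx
  set my := ∑ j, p j * y j with hmy
  have hzero : ∑ i, p i * (x i - mx) = 0 := by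
    have h1 : ∀ i ∈ univ, p i * (x i - mx) = p i * x i - mx * p i := fun i _ => by ring
    rw [Finset.sum_congr rfl h1, Finset.sum_sub_distrib, ← Finset.mul_sum, hs, ← hmx]
    ring
  have hcenter : ∑ i, p i * (x i - mx) * y i = ∑ i, p i * (x i - mx) * (y i - my) := by
    have h1 : ∀ i ∈ univ, p i * (x i - mx) * (y i - my)
        = p i * (x i - mx) * y i - my * (p i * (x i - mx)) := fun i _ => by ring
    rw [Finset.sum_congr rfl h1, Finset.sum_sub_distrib, ← Finset.mul_sum, hzero]
    ring
  have CS := Finset.sum_mul_sq_le_sq_mul_sq univ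
    (fun i => Real.sqrt (p i) * (x i - mx)) (fun i => Real.sqrt (p i) * (y i - my))
  have hfg : ∀ i ∈ univ, (Real.sqrt (p i) * (x i - mx)) * (Real.sqrt (p i) * (y i - my))
      = p i * (x i - mx) * (y i - my) := by
    intro i _
    rw [show (Real.sqrt (p i) * (x i - mx)) * (Real.sqrt (p i) * (y i - my))
        = (Real.sqrt (p i) * Real.sqrt (p i)) * ((x i - mx) * (y i - my)) from by ring,
      Real.mul_self_sqrt (hp i)]
    ring
  have hf2 : ∀ i ∈ univ, (Real.sqrt (p i) * (x i - mx)) ^ 2 = p i * (x i - mx) ^ 2 := by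
    intro i _
    rw [mul_pow, Real.sq_sqrt (hp i)]
  have hg2 : ∀ i ∈ univ, (Real.sqrt (p i) * (y i - my)) ^ 2 = p i * (y i - my) ^ 2 := by
    intro i _
    rw [mul_pow, Real.sq_sqrt (hp i)]
  rw [Finset.sum_congr rfl hfg, Finset.sum_congr rfl hf2, Finset.sum_congr rfl hg2] at CS
  have hvx := softmax_var_le p x hp hs
  have hvy := softmax_var_le p y hp hs
  rw [← hmx] at hvx
  rw [← hmy] at hvy
  have hvx0 : (0:ℝ) ≤ ∑ i, p i * (x i - mx) ^ 2 :=
    Finset.sum_nonneg fun i _ => mul_nonneg (hp i) (sq_nonneg _)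
  have hvy0 : (0:ℝ) ≤ ∑ i, p i * (y i - my) ^ 2 :=
    Finset.sum_nonneg fun i _ => mul_nonneg (hp i) (sq_nonneg _)
  have hA0 : (0:ℝ) ≤ ∑ i, x i ^ 2 := Finset.sum_nonneg fun i _ => sq_nonneg _
  have hB0 : (0:ℝ) ≤ ∑ i, y i ^ 2 := Finset.sum_nonneg fun i _ => sq_nonneg _
  have hsq : (∑ i, p i * (x i - mx) * (y i - my)) ^ 2
      ≤ (1 / 2 * ∑ i, x i ^ 2) * (1 / 2 * ∑ i, y i ^ 2) := by
    calc (∑ i, p i * (x i - mx) * (y i - my)) ^ 2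
        ≤ (∑ i, p i * (x i - mx) ^ 2) * ∑ i, p i * (y i - my) ^ 2 := CS
      _ ≤ (1 / 2 * ∑ i, x i ^ 2) * (1 / 2 * ∑ i, y i ^ 2) := by
          exact mul_le_mul hvx hvy hvy0 (by linarith)
  rw [hcenter]
  have hsA := Real.sq_sqrt hA0
  have hsB := Real.sq_sqrt hB0
  have hnA := Real.sqrt_nonneg (∑ i, x i ^ 2)
  have hnB := Real.sqrt_nonneg (∑ i, y i ^ 2)
  nlinarith [hsq, mul_nonneg hnA hnB,
    sq_nonneg (∑ i, p i * (x i - mx) * (y i - my)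
      - 1 / 2 * Real.sqrt (∑ i, x i ^ 2) * Real.sqrt (∑ i, y i ^ 2))]

end CovBounds

noncomputable def softmaxE {n : ℕ} (v : EuclideanSpace ℝ (Fin n)) : EuclideanSpace ℝ (Fin n) :=
  WithLp.toLp 2 (fun i => Real.exp (v i) / ∑ j, Real.exp (v j))

section Deriv

variable {n : ℕ}

/-- The `i`-th component of the softmax Jacobian at a point with softmax value `p`. -/
noncomputable def softD (p : Fin n → ℝ) (i : Fin n) : EuclideanSpace ℝ (Fin n) →L[ℝ] ℝ :=
  p i • (EuclideanSpace.proj i - ∑ j, p j • EuclideanSpace.proj j)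

/-- The softmax Jacobian as a continuous linear map on Euclidean space. -/
noncomputable def softJ (p : Fin n → ℝ) :
    EuclideanSpace ℝ (Fin n) →L[ℝ] EuclideanSpace ℝ (Fin n) :=
  ((PiLp.continuousLinearEquiv 2 ℝ (fun _ : Fin n => ℝ)).symm.toContinuousLinearMap).comp
    (ContinuousLinearMap.pi (softD p))

lemma softD_apply (p : Fin n → ℝ) (i : Fin n) (x : EuclideanSpace ℝ (Fin n)) :
    softD p i x = p i * (x i - ∑ j, p j * x j) := by
  simp [softD, ContinuousLinearMap.sum_apply, mul_comm]

lemma softJ_apply (p : Fin n → ℝ) (x : EuclideanSpace ℝ (Fin n)) (i : Fin n) :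
    softJ p x i = p i * (x i - ∑ j, p j * x j) := by
  rw [show softJ p x i = softD p i x from rfl, softD_apply]

lemma softJ_norm_le (p : Fin n → ℝ) (hp : ∀ i, 0 ≤ p i) (hs : ∑ i, p i = 1) :
    ‖softJ p‖ ≤ 1 / 2 := by
  refine ContinuousLinearMap.opNorm_le_bound _ (by norm_num) fun x => ?_
  rw [EuclideanSpace.norm_eq, EuclideanSpace.norm_eq]
  simp only [softJ_apply, Real.norm_eq_abs, sq_abs]
  set y : Fin n → ℝ := fun i => p i * (x i - ∑ j, p j * x j) with hy
  have hkey : ∑ i, y i ^ 2 = ∑ i, p i * (x i - ∑ j, p j * x j) * y i :=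
    Finset.sum_congr rfl fun i _ => by rw [hy]; ring
  have hcov := softmax_cov_le p (fun i => x i) y hp hs
  have hy0 : (0:ℝ) ≤ ∑ i, y i ^ 2 := Finset.sum_nonneg fun i _ => sq_nonneg _
  have hN2 : Real.sqrt (∑ i, y i ^ 2) ^ 2 = ∑ i, y i ^ 2 := Real.sq_sqrt hy0
  have hA0 : (0:ℝ) ≤ Real.sqrt (∑ i, x i ^ 2) := Real.sqrt_nonneg _
  have hN0 : (0:ℝ) ≤ Real.sqrt (∑ i, y i ^ 2) := Real.sqrt_nonneg _
  -- N^2 ≤ (1/2) A N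
  have hineq : Real.sqrt (∑ i, y i ^ 2) ^ 2
      ≤ 1 / 2 * Real.sqrt (∑ i, x i ^ 2) * Real.sqrt (∑ i, y i ^ 2) :=
    calc Real.sqrt (∑ i, y i ^ 2) ^ 2 = ∑ i, y i ^ 2 := hN2
      _ = ∑ i, p i * (x i - ∑ j, p j * x j) * y i := hkey
      _ ≤ 1 / 2 * Real.sqrt (∑ i, x i ^ 2) * Real.sqrt (∑ i, y i ^ 2) := by
          simpa using hcov
  rcases eq_or_lt_of_le hN0 with h0 | h0
  · rw [← h0]; positivity
  · have := (mul_le_mul_iff_of_pos_right h0).1 (by nlinarith [hineq] :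
      Real.sqrt (∑ i, y i ^ 2) * Real.sqrt (∑ i, y i ^ 2)
        ≤ (1 / 2 * Real.sqrt (∑ i, x i ^ 2)) * Real.sqrt (∑ i, y i ^ 2))
    exact this

lemma softmax_hasFDerivWithinAt (hn : 0 < n) (z : EuclideanSpace ℝ (Fin n)) :
    HasFDerivWithinAt softmaxE
      (softJ (fun i => Real.exp (z i) / ∑ j, Real.exp (z j))) Set.univ z := by
  have hS : 0 < ∑ j, Real.exp (z j) :=
    Finset.sum_pos (fun j _ => Real.exp_pos _) ⟨⟨0, hn⟩, Finset.mem_univ _⟩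
  rw [hasFDerivWithinAt_piLp]
  intro i
  have hproj : ∀ j, HasFDerivAt (fun w : EuclideanSpace ℝ (Fin n) => w j)
      (PiLp.proj (𝕜 := ℝ) 2 (fun _ : Fin n => ℝ) j) z :=
    fun j => (PiLp.hasStrictFDerivAt_apply (𝕜 := ℝ) 2 z j).hasFDerivAt
  have hexp : ∀ j, HasFDerivAt (fun w : EuclideanSpace ℝ (Fin n) => Real.exp (w j))
      (Real.exp (z j) • PiLp.proj (𝕜 := ℝ) 2 (fun _ : Fin n => ℝ) j) z :=
    fun j => by have := (Real.hasDerivAt_exp (z j)).comp_hasFDerivAt z (hproj j); exact this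
  have hsum : HasFDerivAt (fun w : EuclideanSpace ℝ (Fin n) => ∑ j, Real.exp (w j))
      (∑ j, Real.exp (z j) • PiLp.proj (𝕜 := ℝ) 2 (fun _ : Fin n => ℝ) j) z :=
    HasFDerivAt.fun_sum fun j _ => hexp j
  have hinv := (hasFDerivAt_inv hS.ne').comp z hsum
  have hm := (hexp i).mul hinv
  have heq : (Real.exp (z i) •
        ((ContinuousLinearMap.smulRight (1 : ℝ →L[ℝ] ℝ) (-((∑ j, Real.exp (z j)) ^ 2)⁻¹)).comp
          (∑ j, Real.exp (z j) • PiLp.proj (𝕜 := ℝ) 2 (fun _ : Fin n => ℝ) j))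
      + (∑ j, Real.exp (z j))⁻¹ • (Real.exp (z i) • PiLp.proj (𝕜 := ℝ) 2 (fun _ : Fin n => ℝ) i))
      = PiLp.proj (𝕜 := ℝ) 2 (fun _ : Fin n => ℝ) i ∘L softJ (fun k => Real.exp (z k) / ∑ j, Real.exp (z j)) := by
    ext x
    simp only [ContinuousLinearMap.add_apply, ContinuousLinearMap.smul_apply,
      ContinuousLinearMap.comp_apply, ContinuousLinearMap.sum_apply,
      ContinuousLinearMap.smulRight_apply, ContinuousLinearMap.one_apply,
      smul_eq_mul, PiLp.proj_apply]
    rw [show (softJ (fun k => Real.exp (z k) / ∑ j, Real.exp (z j)) x) i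
        = (Real.exp (z i) / ∑ j, Real.exp (z j)) *
          (x i - ∑ j, (Real.exp (z j) / ∑ j', Real.exp (z j')) * x j) from softJ_apply _ _ _]
    simp_rw [div_mul_eq_mul_div]
    rw [← Finset.sum_div]
    field_simp
    ring
  have hfun : (fun w : EuclideanSpace ℝ (Fin n) => softmaxE w i)
      = fun w => Real.exp (w i) * (∑ j, Real.exp (w j))⁻¹ := by
    funext w
    simp [softmaxE, div_eq_mul_inv]
  rw [hfun, ← heq]
  exact hm.hasFDerivWithinAt

end Deriv

theorem softmax_lipschitz (n : ℕ) (u v : EuclideanSpace ℝ (Fin n)) :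
    ‖softmaxE (u + v) - softmaxE u‖ ≤ (1 / 2) * ‖v‖ := by
  rcases Nat.eq_zero_or_pos n with hn | hn
  · subst hn
    have h : softmaxE (u + v) - softmaxE u = 0 := Subsingleton.elim _ _
    rw [h, norm_zero]
    positivity
  · have key : ∀ z : EuclideanSpace ℝ (Fin n),
        ‖softJ (fun i => Real.exp (z i) / ∑ j, Real.exp (z j))‖ ≤ 1 / 2 := by
      intro z
      have hS : 0 < ∑ j, Real.exp (z j) :=
        Finset.sum_pos (fun j _ => Real.exp_pos _) ⟨⟨0, hn⟩, Finset.mem_univ _⟩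
      refine softJ_norm_le _ (fun i => by positivity) ?_
      rw [← Finset.sum_div, div_self hS.ne']
    have := Convex.norm_image_sub_le_of_norm_hasFDerivWithin_le
      (f := softmaxE)
      (f' := fun z => softJ (fun i => Real.exp (z i) / ∑ j, Real.exp (z j)))
      (fun z _ => softmax_hasFDerivWithinAt hn z)
      (fun z _ => key z) convex_univ (Set.mem_univ u) (Set.mem_univ (u + v))
    simpa using this
end

section
/- For any z in R^n, the Jacobian of softmax, ∇σ(z) = diag(σ(z)) − σ(z)σ(z)^⊤, has operator 2-norm at most 1/2. -/
/-- The Jacobian of softmax: `diag(σ(z)) − σ(z)σ(z)ᵀ`. -/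
noncomputable def softmaxJac {n : ℕ} (z : Fin n → ℝ) : Matrix (Fin n) (Fin n) ℝ :=
  Matrix.diagonal (softmax z) - Matrix.of fun i j => softmax z i * softmax z j

lemma softmax_nonneg {n : ℕ} (z : Fin n → ℝ) (i : Fin n) : 0 ≤ softmax z i := by
  unfold softmax
  positivity

lemma softmax_sum_one {n : ℕ} (hn : 0 < n) (z : Fin n → ℝ) : ∑ i, softmax z i = 1 := by
  unfold softmax
  rw [← Finset.sum_div]
  have : (0:ℝ) < ∑ j, Real.exp (z j) :=
    Finset.sum_pos (fun j _ => Real.exp_pos _) (by simp [Finset.univ_nonempty_iff, Fin.pos_iff_nonempty.mp hn])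
  field_simp

/-- Row-wise absolute sum bound for the softmax Jacobian. -/
lemma softmaxJac_row_abs_sum_le {n : ℕ} (hn : 0 < n) (z : Fin n → ℝ) (i : Fin n) :
    ∑ j, |softmaxJac z i j| ≤ 1 / 2 := by
  set s := softmax z with hs
  have hpos : ∀ k, 0 ≤ s k := softmax_nonneg z
  have hsum : ∑ k, s k = 1 := softmax_sum_one hn z
  have hle1 : ∀ k, s k ≤ 1 := by
    intro k
    calc s k ≤ ∑ j, s j := Finset.single_le_sum (fun j _ => hpos j) (Finset.mem_univ k)
    _ = 1 := hsum
  have habs : ∀ j, |softmaxJac z i j| = (if j = i then s i - s i * s i else s i * s j) := by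
    intro j
    by_cases h : j = i
    · subst h
      simp only [softmaxJac, Matrix.sub_apply, Matrix.diagonal_apply_eq, Matrix.of_apply, if_pos rfl, eq_self_iff_true, if_true, ← hs]
      rw [abs_of_nonneg]
      nlinarith [hpos j, hle1 j]
    · simp only [softmaxJac, Matrix.sub_apply, Matrix.diagonal_apply_ne' _ h, Matrix.of_apply,
        if_neg h, zero_sub, abs_neg]
      exact abs_of_nonneg (mul_nonneg (hpos i) (hpos j))
  calc ∑ j, |softmaxJac z i j|
      = ∑ j, (if j = i then s i - s i * s i else s i * s j) := by
        exact Finset.sum_congr rfl fun j _ => habs j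
    _ = (s i - s i * s i) + ∑ j ∈ Finset.univ.erase i, s i * s j := by
        rw [← Finset.add_sum_erase _ _ (Finset.mem_univ i)]
        simp only [if_pos rfl]
        congr 1
        exact Finset.sum_congr rfl fun j hj => by
          rw [if_neg (Finset.ne_of_mem_erase hj)]
    _ = (s i - s i * s i) + s i * (1 - s i) := by
        rw [← Finset.mul_sum]
        congr 1
        rw [Finset.sum_erase_eq_sub (Finset.mem_univ i), hsum]
    _ ≤ 1 / 2 := by nlinarith [hpos i, hle1 i, sq_nonneg (2 * s i - 1)]

theorem softmaxJac_opNorm_le (n : ℕ) (z : Fin n → ℝ) :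
    ‖Matrix.toEuclideanCLM (𝕜 := ℝ) (softmaxJac z)‖ ≤ 1 / 2 := by
  rcases Nat.eq_zero_or_pos n with hn | hn
  · subst hn
    have : Matrix.toEuclideanCLM (𝕜 := ℝ) (softmaxJac z) = 0 := Subsingleton.elim _ _
    rw [this, norm_zero]; norm_num
  refine ContinuousLinearMap.opNorm_le_bound _ (by norm_num) fun x => ?_
  set A := softmaxJac z with hA
  have hAsymm : ∀ i j, A i j = A j i := by
    intro i j
    by_cases h : i = j
    · subst h; rfl
    · simp only [hA, softmaxJac, Matrix.sub_apply, Matrix.of_apply,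
        Matrix.diagonal_apply_ne _ h, Matrix.diagonal_apply_ne' _ h]
      ring
  have hrow : ∀ i, ∑ j, |A i j| ≤ 1 / 2 := softmaxJac_row_abs_sum_le hn z
  have happly : ∀ i, Matrix.toEuclideanCLM (𝕜 := ℝ) A x i = ∑ j, A i j * x j := fun i => rfl
  -- key quadratic bound
  have key : ∑ i, (∑ j, A i j * x j) ^ 2 ≤ (1/2)^2 * ∑ j, (x j)^2 := by
    have step1 : ∀ i, (∑ j, A i j * x j) ^ 2 ≤ (1/2) * ∑ j, |A i j| * (x j)^2 := by
      intro i
      have h1 : (∑ j, A i j * x j) ^ 2 ≤ (∑ j, |A i j| * |x j|) ^ 2 := by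
        have hb : |∑ j, A i j * x j| ≤ ∑ j, |A i j| * |x j| := by
          refine (Finset.abs_sum_le_sum_abs _ _).trans ?_
          exact le_of_eq (Finset.sum_congr rfl fun j _ => abs_mul _ _)
        calc (∑ j, A i j * x j) ^ 2 = |∑ j, A i j * x j| ^ 2 := (sq_abs _).symm
          _ ≤ (∑ j, |A i j| * |x j|) ^ 2 := by
              apply pow_le_pow_left₀ (abs_nonneg _) hb
      have h2 : (∑ j, |A i j| * |x j|) ^ 2 ≤ (∑ j, |A i j|) * ∑ j, |A i j| * (x j)^2 := by
        have := Finset.sum_mul_sq_le_sq_mul_sq Finset.univ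
          (fun j => Real.sqrt |A i j|) (fun j => Real.sqrt |A i j| * |x j|)
        have e1 : ∀ j : Fin n, Real.sqrt |A i j| * (Real.sqrt |A i j| * |x j|)
            = |A i j| * |x j| := by
          intro j
          rw [← mul_assoc, Real.mul_self_sqrt (abs_nonneg _)]
        have e2 : ∀ j : Fin n, (Real.sqrt |A i j|) ^ 2 = |A i j| := fun j =>
          Real.sq_sqrt (abs_nonneg _)
        have e3 : ∀ j : Fin n, (Real.sqrt |A i j| * |x j|) ^ 2 = |A i j| * (x j)^2 := by
          intro j
          rw [mul_pow, Real.sq_sqrt (abs_nonneg _), sq_abs]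
        simpa only [e1, e2, e3] using this
      have h3 : (∑ j, |A i j|) * ∑ j, |A i j| * (x j)^2
          ≤ (1/2) * ∑ j, |A i j| * (x j)^2 := by
        apply mul_le_mul_of_nonneg_right (hrow i)
        exact Finset.sum_nonneg fun j _ => mul_nonneg (abs_nonneg _) (sq_nonneg _)
      linarith
    calc ∑ i, (∑ j, A i j * x j) ^ 2
        ≤ ∑ i, (1/2) * ∑ j, |A i j| * (x j)^2 :=
          Finset.sum_le_sum fun i _ => step1 i
      _ = (1/2) * ∑ j, (∑ i, |A i j|) * (x j)^2 := by
          rw [← Finset.mul_sum, Finset.sum_comm]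
          congr 1
          exact Finset.sum_congr rfl fun j _ => by rw [Finset.sum_mul]
      _ ≤ (1/2) * ∑ j, (1/2) * (x j)^2 := by
          apply mul_le_mul_of_nonneg_left _ (by norm_num)
          refine Finset.sum_le_sum fun j _ => ?_
          apply mul_le_mul_of_nonneg_right _ (sq_nonneg _)
          calc ∑ i, |A i j| = ∑ i, |A j i| := by
                exact Finset.sum_congr rfl fun i _ => by rw [hAsymm]
            _ ≤ 1/2 := hrow j
      _ = (1/2)^2 * ∑ j, (x j)^2 := by rw [← Finset.mul_sum]; ring
  -- convert to norms
  rw [EuclideanSpace.norm_eq, EuclideanSpace.norm_eq]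
  simp only [happly, Real.norm_eq_abs, sq_abs]
  calc Real.sqrt (∑ i, (∑ j, A i j * x j) ^ 2)
      ≤ Real.sqrt ((1/2)^2 * ∑ j, (x j)^2) := Real.sqrt_le_sqrt key
    _ = 1/2 * Real.sqrt (∑ j, (x j)^2) := by
        rw [Real.sqrt_mul (sq_nonneg _), Real.sqrt_sq (by norm_num : (0:ℝ) ≤ 1/2)]
end

section
/- Oracle dominance over replicator dynamics: let p : [0,∞) → R^n be continuous, let z(t) = z(0) + ∫₀ᵗ p(τ)dτ, and define x_R(t) = σ(z(t)) and x_OR(t) = σ(z(t) + p(t)). Then for every T ≥ 0, ∫₀ᵀ p(t)·x_OR(t) dt ≥ ∫₀ᵀ p(t)·x_R(t) dt. -/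
lemma softmax_key {n : ℕ} (z p : Fin n → ℝ) :
    ∑ i, p i * softmax z i ≤ ∑ i, p i * softmax (z + p) i := by
  rcases Nat.eq_zero_or_pos n with hn | hn
  · subst hn; simp
  have hS : (0:ℝ) < ∑ j, Real.exp (z j) :=
    Finset.sum_pos (fun j _ => Real.exp_pos _) (Finset.univ_nonempty_iff.2 (Fin.pos_iff_nonempty.1 hn))
  have hS' : (0:ℝ) < ∑ j, Real.exp (z j + p j) :=
    Finset.sum_pos (fun j _ => Real.exp_pos _) (Finset.univ_nonempty_iff.2 (Fin.pos_iff_nonempty.1 hn))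
  have lhs_eq : ∑ i, p i * softmax z i = (∑ i, p i * Real.exp (z i)) / ∑ j, Real.exp (z j) := by
    rw [Finset.sum_div]; simp [softmax, mul_div_assoc]
  have rhs_eq : ∑ i, p i * softmax (z + p) i
      = (∑ i, p i * Real.exp (z i + p i)) / ∑ j, Real.exp (z j + p j) := by
    rw [Finset.sum_div]; simp [softmax, mul_div_assoc]
  rw [lhs_eq, rhs_eq, div_le_div_iff₀ hS hS']
  rw [Finset.sum_mul_sum, Finset.sum_mul_sum]
  set f : Fin n → Fin n → ℝ :=
    fun i j => p i * Real.exp (z i + p i) * Real.exp (z j) - p i * Real.exp (z i) * Real.exp (z j + p j) with hf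
  have hsum : ∑ i, ∑ j, (f i j + f j i) = 2 * ∑ i, ∑ j, f i j := by
    rw [two_mul]
    rw [show ∑ i, ∑ j, (f i j + f j i) = (∑ i, ∑ j, f i j) + ∑ i, ∑ j, f j i by
      simp [Finset.sum_add_distrib]]
    rw [Finset.sum_comm (f := fun i j => f j i)]
  have hterm : ∀ i j, 0 ≤ f i j + f j i := by
    intro i j
    have e1 : Real.exp (z i + p i) = Real.exp (z i) * Real.exp (p i) := Real.exp_add _ _
    have e2 : Real.exp (z j + p j) = Real.exp (z j) * Real.exp (p j) := Real.exp_add _ _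
    have hmono : 0 ≤ (p i - p j) * (Real.exp (p i) - Real.exp (p j)) := by
      rcases le_total (p i) (p j) with h | h
      · exact mul_nonneg_of_nonpos_of_nonpos (by linarith) (by linarith [Real.exp_le_exp.2 h])
      · exact mul_nonneg (by linarith) (by simp [Real.exp_le_exp.2 h])
    have key : f i j + f j i
        = Real.exp (z i) * Real.exp (z j) * ((p i - p j) * (Real.exp (p i) - Real.exp (p j))) := by
      simp only [hf, e1, e2]; ring
    rw [key]
    exact mul_nonneg (mul_nonneg (Real.exp_pos _).le (Real.exp_pos _).le) hmono
  have h2 : 0 ≤ 2 * ∑ i, ∑ j, f i j := by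
    rw [← hsum]
    exact Finset.sum_nonneg fun i _ => Finset.sum_nonneg fun j _ => hterm i j
  have h3 : 0 ≤ ∑ i, ∑ j, f i j := by linarith
  have h4 : ∑ i, ∑ j, f i j
      = (∑ i, ∑ j, p i * Real.exp (z i + p i) * Real.exp (z j))
        - ∑ i, ∑ j, p i * Real.exp (z i) * Real.exp (z j + p j) := by
    simp [hf, Finset.sum_sub_distrib]
  linarith [h3, h4.symm ▸ h3]

lemma cont_aux {n : ℕ} (p w : ℝ → Fin n → ℝ) (hp : Continuous p) (hw : Continuous w) :
    Continuous fun t => ∑ i, p t i * softmax (w t) i := by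
  apply continuous_finset_sum
  intro i _
  have hpi : Continuous fun t => p t i := (continuous_apply i).comp hp
  have hnum : Continuous fun t => Real.exp (w t i) :=
    Real.continuous_exp.comp ((continuous_apply i).comp hw)
  have hden : Continuous fun t => ∑ j, Real.exp (w t j) :=
    continuous_finset_sum _ fun j _ => Real.continuous_exp.comp ((continuous_apply j).comp hw)
  have hpos : ∀ t, (∑ j, Real.exp (w t j)) ≠ 0 := fun t =>
    (Finset.sum_pos (fun j _ => Real.exp_pos _) ⟨i, Finset.mem_univ i⟩).ne'
  exact hpi.mul (hnum.div hden hpos)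

theorem oracle_dominates_RD (n : ℕ) (p : ℝ → (Fin n → ℝ)) (hp : Continuous p)
    (z : ℝ → (Fin n → ℝ)) (z0 : Fin n → ℝ)
    (hz : ∀ t, z t = z0 + ∫ τ in (0:ℝ)..t, p τ)
    (T : ℝ) (hT : 0 ≤ T) :
    ∫ t in (0:ℝ)..T, ∑ i, p t i * softmax (z t) i ≤
      ∫ t in (0:ℝ)..T, ∑ i, p t i * softmax (z t + p t) i := by
  have hzc : Continuous z := by
    have hprim : Continuous fun t => ∫ τ in (0:ℝ)..t, p τ :=
      intervalIntegral.continuous_primitive (fun a b => (hp.intervalIntegrable a b)) 0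
    have : z = fun t => z0 + ∫ τ in (0:ℝ)..t, p τ := funext hz
    rw [this]
    exact continuous_const.add hprim
  have h1 : Continuous fun t => ∑ i, p t i * softmax (z t) i := cont_aux p z hp hzc
  have h2 : Continuous fun t => ∑ i, p t i * softmax (z t + p t) i :=
    cont_aux p (fun t => z t + p t) hp (hzc.add hp)
  exact intervalIntegral.integral_mono_on hT (h1.intervalIntegrable _ _)
    (h2.intervalIntegrable _ _) (fun t _ => softmax_key (z t) (p t))
end

section
/- Nonnegativity of the in-phase component: let v(τ) = p̄ sin τ + q̄ cos τ for fixed p̄, q̄ ∈ R^n and fix a > 0. Then T₁(a) := (1/(2π)) ∫₀^{2π} v(τ)·σ(a v(τ)) dτ ≥ 0. Moreover T₁(a) > 0 whenever at least one of p̄, q̄ is not a scalar multiple of 1_n. -/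
open Real

lemma softmax_key_s12 {n : ℕ} (a : ℝ) (ha : 0 < a) (u : Fin n → ℝ) :
    0 ≤ (∑ i, u i * softmax (a • u) i) + ∑ i, (-u) i * softmax (a • (-u)) i ∧
    ((∃ i j : Fin n, u i ≠ u j) →
      0 < (∑ i, u i * softmax (a • u) i) + ∑ i, (-u) i * softmax (a • (-u)) i) := by
  rcases Nat.eq_zero_or_pos n with hn | hn
  · subst hn
    simp
  haveI : NeZero n := ⟨hn.ne'⟩
  set A : Fin n → ℝ := fun i => Real.exp (a * u i) with hA
  set B : Fin n → ℝ := fun i => Real.exp (-(a * u i)) with hB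
  have hS : 0 < ∑ j, A j := Finset.sum_pos (fun j _ => Real.exp_pos _) Finset.univ_nonempty
  have hS' : 0 < ∑ j, B j := Finset.sum_pos (fun j _ => Real.exp_pos _) Finset.univ_nonempty
  have hsm : ∀ i, softmax (a • u) i = A i / (∑ j, A j) := by
    intro i
    simp [softmax, hA, Pi.smul_apply, smul_eq_mul]
  have hsm' : ∀ i, softmax (a • (-u)) i = B i / (∑ j, B j) := by
    intro i
    simp [softmax, hB, Pi.smul_apply, smul_eq_mul, mul_neg]
  have hE : (∑ i, u i * softmax (a • u) i) + (∑ i, (-u) i * softmax (a • (-u)) i)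
      = (∑ i, u i * A i) / (∑ j, A j) - (∑ i, u i * B i) / (∑ j, B j) := by
    simp only [hsm, hsm', Pi.neg_apply, Finset.sum_div]
    rw [← Finset.sum_add_distrib, ← Finset.sum_sub_distrib]
    exact Finset.sum_congr rfl fun i _ => by ring
  have hsplitterm : ∀ i j : Fin n, (u i - u j) * (A i * B j - A j * B i)
      = ((u i * A i) * B j - A i * (u j * B j)) + ((u j * A j) * B i - A j * (u i * B i)) :=
    fun i j => by ring
  have h1 : (∑ i, ∑ j, ((u i * A i) * B j - A i * (u j * B j)))
      = (∑ i, u i * A i) * (∑ j, B j) - (∑ j, A j) * (∑ j, u j * B j) := by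
    rw [Fintype.sum_mul_sum, Fintype.sum_mul_sum, ← Finset.sum_sub_distrib]
    exact Finset.sum_congr rfl fun i _ => Finset.sum_sub_distrib _ _
  have hN : (∑ i, ∑ j, (u i - u j) * (A i * B j - A j * B i))
      = 2 * ((∑ i, u i * A i) * (∑ j, B j) - (∑ j, A j) * (∑ j, u j * B j)) := by
    calc (∑ i, ∑ j, (u i - u j) * (A i * B j - A j * B i))
        = ∑ i, ∑ j, (((u i * A i) * B j - A i * (u j * B j))
            + ((u j * A j) * B i - A j * (u i * B i))) :=
          Finset.sum_congr rfl fun i _ => Finset.sum_congr rfl fun j _ => hsplitterm i j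
      _ = (∑ i, ∑ j, ((u i * A i) * B j - A i * (u j * B j)))
            + ∑ i, ∑ j, ((u j * A j) * B i - A j * (u i * B i)) := by
          rw [← Finset.sum_add_distrib]
          exact Finset.sum_congr rfl fun i _ => Finset.sum_add_distrib
      _ = (∑ i, ∑ j, ((u i * A i) * B j - A i * (u j * B j)))
            + ∑ j, ∑ i, ((u j * A j) * B i - A j * (u i * B i)) := by
          rw [Finset.sum_comm]
      _ = 2 * ((∑ i, u i * A i) * (∑ j, B j) - (∑ j, A j) * (∑ j, u j * B j)) := by
          rw [h1]; ring
  have hEval : (∑ i, u i * softmax (a • u) i) + (∑ i, (-u) i * softmax (a • (-u)) i)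
      = (∑ i, ∑ j, (u i - u j) * (A i * B j - A j * B i))
          / (2 * ((∑ j, A j) * (∑ j, B j))) := by
    rw [hE, hN]
    field_simp
  have hterm : ∀ i j : Fin n, 0 ≤ (u i - u j) * (A i * B j - A j * B i) := by
    intro i j
    rcases le_total (u j) (u i) with h | h
    · apply mul_nonneg (by linarith)
      have h1 : A j * B i ≤ A i * B j := by
        apply mul_le_mul (Real.exp_le_exp.2 (by nlinarith)) (Real.exp_le_exp.2 (by nlinarith))
          (Real.exp_pos _).le (Real.exp_pos _).le
      linarith
    · have h1 : A i * B j ≤ A j * B i := by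
        apply mul_le_mul (Real.exp_le_exp.2 (by nlinarith)) (Real.exp_le_exp.2 (by nlinarith))
          (Real.exp_pos _).le (Real.exp_pos _).le
      have h2 : 0 ≤ (u j - u i) * (A j * B i - A i * B j) :=
        mul_nonneg (by linarith) (by linarith)
      nlinarith [h2]
  constructor
  · rw [hEval]
    apply div_nonneg _ (by positivity)
    exact Finset.sum_nonneg fun i _ => Finset.sum_nonneg fun j _ => hterm i j
  · rintro ⟨i, j, hij⟩
    rw [hEval]
    apply div_pos _ (by positivity)
    have htp : 0 < (u i - u j) * (A i * B j - A j * B i) := by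
      rcases lt_or_gt_of_ne hij with h | h
      · apply mul_pos_of_neg_of_neg (by linarith)
        have h1 : A i * B j < A j * B i := by
          apply mul_lt_mul'' (Real.exp_lt_exp.2 (by nlinarith)) (Real.exp_lt_exp.2 (by nlinarith))
            (Real.exp_pos _).le (Real.exp_pos _).le
        linarith
      · apply mul_pos (by linarith)
        have h1 : A j * B i < A i * B j := by
          apply mul_lt_mul'' (Real.exp_lt_exp.2 (by nlinarith)) (Real.exp_lt_exp.2 (by nlinarith))
            (Real.exp_pos _).le (Real.exp_pos _).le
        linarith
    apply Finset.sum_pos' (fun i _ => Finset.sum_nonneg fun j _ => hterm i j)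
    exact ⟨i, Finset.mem_univ i,
      Finset.sum_pos' (fun j _ => hterm i j) ⟨j, Finset.mem_univ j, htp⟩⟩

lemma interval_pos_aux {f : ℝ → ℝ} (hf : Continuous f) (hnn : ∀ x, 0 ≤ f x)
    {a b t : ℝ} (ht : t ∈ Set.Ioo a b) (hpos : 0 < f t) :
    0 < ∫ x in a..b, f x := by
  obtain ⟨ε, hε, hball⟩ := Metric.isOpen_iff.1 (isOpen_lt continuous_const hf) t hpos
  set δ := min ε (min (t - a) (b - t)) with hδ
  have hδ0 : 0 < δ := lt_min hε (lt_min (by linarith [ht.1]) (by linarith [ht.2]))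
  have hδε : δ ≤ ε := min_le_left _ _
  have hδa : δ ≤ t - a := (min_le_right _ _).trans (min_le_left _ _)
  have hδb : δ ≤ b - t := (min_le_right _ _).trans (min_le_right _ _)
  have hsub : ∀ x ∈ Set.Ioo (t - δ/2) (t + δ/2), 0 < f x := by
    intro x hx
    have hb : x ∈ Metric.ball t ε := by
      rw [Metric.mem_ball, Real.dist_eq]
      have : |x - t| < δ/2 := abs_sub_lt_iff.2 ⟨by linarith [hx.2], by linarith [hx.1]⟩
      linarith
    exact hball hb
  have hi : ∀ c d : ℝ, IntervalIntegrable f MeasureTheory.volume c d :=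
    fun c d => hf.intervalIntegrable c d
  have key : (∫ x in a..b, f x)
      = (∫ x in a..(t - δ/2), f x)
        + ((∫ x in (t - δ/2)..(t + δ/2), f x) + ∫ x in (t + δ/2)..b, f x) := by
    rw [intervalIntegral.integral_add_adjacent_intervals (hi _ _) (hi _ _),
      intervalIntegral.integral_add_adjacent_intervals (hi _ _) (hi _ _)]
  have p1 : 0 ≤ ∫ x in a..(t - δ/2), f x :=
    intervalIntegral.integral_nonneg (by linarith) (fun u _ => hnn u)
  have p3 : 0 ≤ ∫ x in (t + δ/2)..b, f x :=
    intervalIntegral.integral_nonneg (by linarith) (fun u _ => hnn u)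
  have p2 : 0 < ∫ x in (t - δ/2)..(t + δ/2), f x :=
    intervalIntegral.intervalIntegral_pos_of_pos_on (hi _ _) hsub (by linarith)
  rw [key]; linarith

theorem in_phase_component_nonneg (n : ℕ) (pbar qbar : Fin n → ℝ) (a : ℝ) (ha : 0 < a) :
    0 ≤ (1 / (2 * π)) * ∫ τ in (0:ℝ)..(2 * π),
          ∑ i, (Real.sin τ * pbar i + Real.cos τ * qbar i) *
            softmax (a • (Real.sin τ • pbar + Real.cos τ • qbar)) i ∧
    ((¬ ∃ c : ℝ, pbar = fun _ => c) ∨ (¬ ∃ c : ℝ, qbar = fun _ => c) →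
      0 < (1 / (2 * π)) * ∫ τ in (0:ℝ)..(2 * π),
            ∑ i, (Real.sin τ * pbar i + Real.cos τ * qbar i) *
              softmax (a • (Real.sin τ • pbar + Real.cos τ • qbar)) i) := by
  rcases Nat.eq_zero_or_pos n with hn | hn
  · subst hn
    constructor
    · simp
    · intro h
      exfalso
      rcases h with h | h
      · exact h ⟨0, funext fun i => i.elim0⟩
      · exact h ⟨0, funext fun i => i.elim0⟩
  haveI : NeZero n := ⟨hn.ne'⟩
  set F : ℝ → ℝ := fun τ => ∑ i, (Real.sin τ * pbar i + Real.cos τ * qbar i) *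
      softmax (a • (Real.sin τ • pbar + Real.cos τ • qbar)) i with hFdef
  have hcont : Continuous F := by
    have hden : ∀ τ : ℝ, (0:ℝ) < ∑ j, Real.exp (a * (Real.sin τ * pbar j + Real.cos τ * qbar j)) :=
      fun τ => Finset.sum_pos (fun j _ => Real.exp_pos _) Finset.univ_nonempty
    have : F = fun τ => ∑ i, (Real.sin τ * pbar i + Real.cos τ * qbar i) *
        (Real.exp (a * (Real.sin τ * pbar i + Real.cos τ * qbar i)) /
          ∑ j, Real.exp (a * (Real.sin τ * pbar j + Real.cos τ * qbar j))) := by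
      funext τ
      simp only [hFdef]
      exact Finset.sum_congr rfl fun i _ => by simp [softmax, Pi.smul_apply, smul_eq_mul]
    rw [this]
    apply continuous_finset_sum
    intro i _
    apply Continuous.mul (by fun_prop)
    exact Continuous.div (by fun_prop) (by fun_prop) fun τ => (hden τ).ne'
  have hFint : ∀ c d : ℝ, IntervalIntegrable F MeasureTheory.volume c d :=
    fun c d => hcont.intervalIntegrable c d
  have hFu : ∀ τ, F τ = ∑ i, (Real.sin τ • pbar + Real.cos τ • qbar) i *
      softmax (a • (Real.sin τ • pbar + Real.cos τ • qbar)) i := by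
    intro τ
    simp only [hFdef]
    exact Finset.sum_congr rfl fun i _ => by simp
  have hHeq : ∀ τ, F (τ + π) = ∑ i, (-(Real.sin τ • pbar + Real.cos τ • qbar)) i *
      softmax (a • (-(Real.sin τ • pbar + Real.cos τ • qbar))) i := by
    intro τ
    have h3 : Real.sin (τ + π) • pbar + Real.cos (τ + π) • qbar
        = -(Real.sin τ • pbar + Real.cos τ • qbar) := by
      funext i
      simp [Real.sin_add_pi, Real.cos_add_pi]
      ring
    rw [hFu (τ + π), h3]
  have hHnn : ∀ τ, 0 ≤ F τ + F (τ + π) := by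
    intro τ
    rw [hFu τ, hHeq τ]
    exact (softmax_key_s12 a ha (Real.sin τ • pbar + Real.cos τ • qbar)).1
  have h2 : (∫ τ in (0:ℝ)..π, F (τ + π)) = ∫ τ in π..(2*π), F τ := by
    rw [intervalIntegral.integral_comp_add_right F π, zero_add]
    norm_num [two_mul]
  have hsplit : (∫ τ in (0:ℝ)..(2*π), F τ) = ∫ τ in (0:ℝ)..π, (F τ + F (τ + π)) := by
    have hcomp : Continuous fun τ : ℝ => F (τ + π) := hcont.comp (continuous_add_right π)
    rw [← intervalIntegral.integral_add_adjacent_intervals (hFint 0 π) (hFint π (2*π)), ← h2,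
      ← intervalIntegral.integral_add (hFint 0 π) (hcomp.intervalIntegrable 0 π)]
  constructor
  · apply mul_nonneg (by positivity)
    rw [hsplit]
    exact intervalIntegral.integral_nonneg Real.pi_pos.le (fun u _ => hHnn u)
  · intro hne
    have hex : ∃ τ₀ ∈ Set.Ioo (0:ℝ) π, ∃ i j : Fin n,
        (Real.sin τ₀ • pbar + Real.cos τ₀ • qbar) i ≠ (Real.sin τ₀ • pbar + Real.cos τ₀ • qbar) j := by
      by_contra hcon
      push_neg at hcon
      have hp2 : (π/2 : ℝ) ∈ Set.Ioo (0:ℝ) π :=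
        ⟨by positivity, by linarith [Real.pi_pos]⟩
      have hp4 : (π/4 : ℝ) ∈ Set.Ioo (0:ℝ) π :=
        ⟨by positivity, by linarith [Real.pi_pos]⟩
      have hc1 := hcon _ hp2
      have hc2 := hcon _ hp4
      have hpconst : ∀ i j, pbar i = pbar j := by
        intro i j
        have := hc1 i j
        simpa [Real.sin_pi_div_two, Real.cos_pi_div_two] using this
      have hqconst : ∀ i j, qbar i = qbar j := by
        intro i j
        have h := hc2 i j
        simp only [Pi.add_apply, Pi.smul_apply, smul_eq_mul, Real.sin_pi_div_four,
          Real.cos_pi_div_four] at h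
        have hp := hpconst i j
        have hs : (0:ℝ) < Real.sqrt 2 / 2 := by positivity
        have hpm : Real.sqrt 2 / 2 * pbar i = Real.sqrt 2 / 2 * pbar j := by rw [hp]
        have h' : Real.sqrt 2 / 2 * qbar i = Real.sqrt 2 / 2 * qbar j := by linarith
        exact mul_left_cancel₀ hs.ne' h'
      rcases hne with h | h
      · exact h ⟨pbar ⟨0, hn⟩, funext fun i => hpconst i ⟨0, hn⟩⟩
      · exact h ⟨qbar ⟨0, hn⟩, funext fun i => hqconst i ⟨0, hn⟩⟩
    obtain ⟨τ₀, hτ₀, hij⟩ := hex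
    have hHcont : Continuous fun τ => F τ + F (τ + π) :=
      hcont.add (hcont.comp (continuous_add_right π))
    have hHpos : 0 < F τ₀ + F (τ₀ + π) := by
      rw [hFu τ₀, hHeq τ₀]
      exact (softmax_key_s12 a ha (Real.sin τ₀ • pbar + Real.cos τ₀ • qbar)).2 hij
    have hpos : 0 < ∫ τ in (0:ℝ)..π, (F τ + F (τ + π)) :=
      interval_pos_aux hHcont hHnn hτ₀ hHpos
    apply mul_pos (by positivity)
    rw [hsplit]
    exact hpos
end

section
/- Average reward under sinusoidal payoff: let v(τ) = p̄ sin τ + q̄ cos τ, let a > 0 and φ ∈ R, and define J(φ,a) = (1/(2π)) ∫₀^{2π} (p̄ sin u + q̄ cos u)·σ(a p̄ sin(u−φ) + a q̄ cos(u−φ)) du. Then J(φ,a) = cos(φ)·T₁(a), where T₁(a) = (1/(2π)) ∫₀^{2π} v(τ)·σ(a v(τ)) dτ ≥ 0. -/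
open Real

section aux
variable {n : ℕ}

/-- v(τ) -/
noncomputable def vAux (p q : Fin n → ℝ) (τ : ℝ) : Fin n → ℝ :=
  fun i => Real.sin τ * p i + Real.cos τ * q i

/-- f(τ) = ⟨v(τ), σ(a v(τ))⟩ -/
noncomputable def fAux (p q : Fin n → ℝ) (a τ : ℝ) : ℝ :=
  ∑ i, vAux p q τ i * softmax (fun j => a * vAux p q τ j) i

/-- g(τ) = ⟨v'(τ), σ(a v(τ))⟩ -/
noncomputable def gAux (p q : Fin n → ℝ) (a τ : ℝ) : ℝ :=
  ∑ i, (Real.cos τ * p i - Real.sin τ * q i) * softmax (fun j => a * vAux p q τ j) i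

lemma smul_eq_vAux (p q : Fin n → ℝ) (a τ : ℝ) :
    a • (Real.sin τ • p + Real.cos τ • q) = fun j => a * vAux p q τ j := by
  funext j; simp [vAux, mul_add]

lemma fAux_periodic (p q : Fin n → ℝ) (a : ℝ) : Function.Periodic (fAux p q a) (2 * π) := by
  intro τ; simp [fAux, vAux, Real.sin_add_two_pi, Real.cos_add_two_pi]

lemma gAux_periodic (p q : Fin n → ℝ) (a : ℝ) : Function.Periodic (gAux p q a) (2 * π) := by
  intro τ; simp [gAux, vAux, Real.sin_add_two_pi, Real.cos_add_two_pi]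

lemma denom_pos [Nonempty (Fin n)] (p q : Fin n → ℝ) (a τ : ℝ) :
    0 < ∑ j, Real.exp (a * vAux p q τ j) :=
  Finset.sum_pos (fun j _ => Real.exp_pos _) Finset.univ_nonempty

lemma fAux_continuous (p q : Fin n → ℝ) (a : ℝ) : Continuous (fAux p q a) := by
  rcases Nat.eq_zero_or_pos n with h | h
  · subst h; exact (continuous_const (y := (0:ℝ))).congr (fun τ => by simp [fAux])
  · haveI : Nonempty (Fin n) := Fin.pos_iff_nonempty.mp h
    unfold fAux softmax
    refine continuous_finset_sum _ fun i _ => ?_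
    refine Continuous.mul (by unfold vAux; fun_prop) ?_
    refine Continuous.div (by unfold vAux; fun_prop) (by unfold vAux; fun_prop) ?_
    exact fun τ => (denom_pos p q a τ).ne'

lemma gAux_continuous (p q : Fin n → ℝ) (a : ℝ) : Continuous (gAux p q a) := by
  rcases Nat.eq_zero_or_pos n with h | h
  · subst h; exact (continuous_const (y := (0:ℝ))).congr (fun τ => by simp [gAux])
  · haveI : Nonempty (Fin n) := Fin.pos_iff_nonempty.mp h
    unfold gAux softmax
    refine continuous_finset_sum _ fun i _ => ?_
    refine Continuous.mul (by fun_prop) ?_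
    refine Continuous.div (by unfold vAux; fun_prop) (by unfold vAux; fun_prop) ?_
    exact fun τ => (denom_pos p q a τ).ne'

end aux

section deriv
variable {n : ℕ}

lemma lse_hasDeriv [Nonempty (Fin n)] (p q : Fin n → ℝ) (a : ℝ) (τ : ℝ) :
    HasDerivAt (fun t => Real.log (∑ j, Real.exp (a * vAux p q t j)))
      (a * gAux p q a τ) τ := by
  have hsum : HasDerivAt (fun t => ∑ j, Real.exp (a * vAux p q t j))
      (∑ j, a * (Real.cos τ * p j - Real.sin τ * q j) * Real.exp (a * vAux p q τ j)) τ := by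
    apply HasDerivAt.fun_sum
    intro j _
    have hv : HasDerivAt (fun t => a * vAux p q t j)
        (a * (Real.cos τ * p j - Real.sin τ * q j)) τ := by
      have h1 : HasDerivAt (fun t => vAux p q t j)
          (Real.cos τ * p j - Real.sin τ * q j) τ := by
        unfold vAux
        have := ((Real.hasDerivAt_sin τ).mul_const (p j)).fun_add
          ((Real.hasDerivAt_cos τ).mul_const (q j))
        simpa [mul_comm, sub_eq_add_neg, neg_mul] using this
      simpa using h1.const_mul a
    simpa [mul_comm, mul_assoc, mul_left_comm] using hv.exp
  have hne : (∑ j, Real.exp (a * vAux p q τ j)) ≠ 0 := (denom_pos p q a τ).ne'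
  have := hsum.log hne
  convert this using 1
  unfold gAux softmax
  rw [Finset.mul_sum, eq_div_iff hne, Finset.sum_mul]
  apply Finset.sum_congr rfl
  intro j _
  field_simp

lemma integral_gAux_eq_zero (p q : Fin n → ℝ) (a : ℝ) (ha : a ≠ 0) :
    (∫ τ in (0:ℝ)..(2 * π), gAux p q a τ) = 0 := by
  rcases Nat.eq_zero_or_pos n with h | h
  · subst h; simp [gAux]
  · haveI : Nonempty (Fin n) := Fin.pos_iff_nonempty.mp h
    have hI : IntervalIntegrable (fun τ => a * gAux p q a τ) MeasureTheory.volume 0 (2 * π) :=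
      (continuous_const.mul (gAux_continuous p q a)).intervalIntegrable _ _
    have key := intervalIntegral.integral_eq_sub_of_hasDerivAt
      (f := fun t => Real.log (∑ j, Real.exp (a * vAux p q t j)))
      (fun τ _ => lse_hasDeriv p q a τ) hI
    have hper : vAux p q (2 * π) = vAux p q 0 := by
      funext j; simp [vAux]
    rw [hper, sub_self] at key
    rw [intervalIntegral.integral_const_mul] at key
    exact (mul_eq_zero.mp key).resolve_left ha

end deriv

section key
variable {n : ℕ}

lemma t_mul_nonneg (t : ℝ) : 0 ≤ t * (Real.exp t - Real.exp (-t)) := by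
  rcases le_or_gt 0 t with h | h
  · exact mul_nonneg h (sub_nonneg.mpr (Real.exp_le_exp.mpr (by linarith)))
  · have h1 : Real.exp t - Real.exp (-t) ≤ 0 :=
      sub_nonpos.mpr (Real.exp_le_exp.mpr (by linarith))
    nlinarith

lemma softmax_key_s13 (x : Fin n → ℝ) :
    ∑ i, x i * softmax (fun j => -x j) i ≤ ∑ i, x i * softmax x i := by
  rcases Nat.eq_zero_or_pos n with h | h
  · subst h; simp
  haveI : Nonempty (Fin n) := Fin.pos_iff_nonempty.mp h
  set S := ∑ j, Real.exp (x j) with hS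
  set S' := ∑ j, Real.exp (-x j) with hS'
  have hSpos : 0 < S := Finset.sum_pos (fun j _ => Real.exp_pos _) Finset.univ_nonempty
  have hS'pos : 0 < S' := Finset.sum_pos (fun j _ => Real.exp_pos _) Finset.univ_nonempty
  set A := ∑ i, x i * Real.exp (x i) with hA
  set B := ∑ i, x i * Real.exp (-x i) with hB
  have e : ∀ s t : ℝ, Real.exp (s - t) = Real.exp s * Real.exp (-t) := fun s t => by
    rw [← Real.exp_add]; ring_nf
  have h1 : ∑ i, ∑ j, x i * Real.exp (x i) * Real.exp (-x j) = A * S' := by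
    rw [hA, Finset.sum_mul]
    exact Finset.sum_congr rfl fun i _ => (Finset.mul_sum _ _ _).symm
  have h2 : ∑ i, ∑ j, x i * Real.exp (-x i) * Real.exp (x j) = B * S := by
    rw [hB, Finset.sum_mul]
    exact Finset.sum_congr rfl fun i _ => (Finset.mul_sum _ _ _).symm
  have h3 : ∑ i, ∑ j, x j * Real.exp (x i) * Real.exp (-x j) = B * S := by
    rw [Finset.sum_comm, hB, Finset.sum_mul]
    refine Finset.sum_congr rfl fun j _ => ?_
    rw [hS, Finset.mul_sum]
    exact Finset.sum_congr rfl fun i _ => by ring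
  have h4 : ∑ i, ∑ j, x j * Real.exp (-x i) * Real.exp (x j) = A * S' := by
    rw [Finset.sum_comm, hA, Finset.sum_mul]
    refine Finset.sum_congr rfl fun j _ => ?_
    rw [hS', Finset.mul_sum]
    exact Finset.sum_congr rfl fun i _ => by ring
  have hD : 0 ≤ ∑ i, ∑ j, (x i - x j) * (Real.exp (x i - x j) - Real.exp (x j - x i)) :=
    Finset.sum_nonneg fun i _ => Finset.sum_nonneg fun j _ => by
      have := t_mul_nonneg (x i - x j)
      rwa [show -(x i - x j) = x j - x i by ring] at this
  have expand : (∑ i, ∑ j, (x i - x j) * (Real.exp (x i - x j) - Real.exp (x j - x i)))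
      = (∑ i, ∑ j, x i * Real.exp (x i) * Real.exp (-x j))
        - (∑ i, ∑ j, x i * Real.exp (-x i) * Real.exp (x j))
        - (∑ i, ∑ j, x j * Real.exp (x i) * Real.exp (-x j))
        + (∑ i, ∑ j, x j * Real.exp (-x i) * Real.exp (x j)) := by
    rw [← Finset.sum_sub_distrib, ← Finset.sum_sub_distrib, ← Finset.sum_add_distrib]
    refine Finset.sum_congr rfl fun i _ => ?_
    rw [← Finset.sum_sub_distrib, ← Finset.sum_sub_distrib, ← Finset.sum_add_distrib]
    refine Finset.sum_congr rfl fun j _ => ?_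
    rw [e, e]; ring
  rw [h1, h2, h3, h4] at expand
  rw [expand] at hD
  have hkey : B * S ≤ A * S' := by linarith
  have lhs_eq : ∑ i, x i * softmax (fun j => -x j) i = B / S' := by
    rw [hB, Finset.sum_div]
    exact Finset.sum_congr rfl fun i _ => by rw [softmax]; ring
  have rhs_eq : ∑ i, x i * softmax x i = A / S := by
    rw [hA, Finset.sum_div]
    exact Finset.sum_congr rfl fun i _ => by rw [softmax]; ring
  rw [lhs_eq, rhs_eq, div_le_div_iff₀ hS'pos hSpos]
  exact hkey

end key

section main
variable {n : ℕ}

lemma integral_fAux_nonneg (p q : Fin n → ℝ) (a : ℝ) (ha : 0 < a) :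
    0 ≤ ∫ τ in (0:ℝ)..(2 * π), fAux p q a τ := by
  have hc := fAux_continuous p q a
  have hint : ∀ c d : ℝ, IntervalIntegrable (fAux p q a) MeasureTheory.volume c d :=
    fun c d => hc.intervalIntegrable _ _
  have hpt : ∀ τ : ℝ, 0 ≤ fAux p q a τ + fAux p q a (τ + π) := by
    intro τ
    have harg : (fun j => a * vAux p q (τ + π) j) = (fun j => -(a * vAux p q τ j)) := by
      funext j; simp [vAux, Real.sin_add_pi, Real.cos_add_pi]; ring
    have hv : ∀ i, vAux p q (τ + π) i = -vAux p q τ i := by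
      intro i; simp [vAux, Real.sin_add_pi, Real.cos_add_pi]; ring
    have h2 : fAux p q a (τ + π)
        = ∑ i, (-vAux p q τ i) * softmax (fun j => -(a * vAux p q τ j)) i := by
      rw [fAux, harg]
      exact Finset.sum_congr rfl fun i _ => by rw [hv i]
    have hkey := softmax_key_s13 (fun j => a * vAux p q τ j)
    have hmul : a * 0 ≤ a * (fAux p q a τ + fAux p q a (τ + π)) := by
      rw [mul_zero, h2, fAux, mul_add, Finset.mul_sum, Finset.mul_sum]
      have e1 : ∑ i, a * (vAux p q τ i * softmax (fun j => a * vAux p q τ j) i)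
          = ∑ i, (a * vAux p q τ i) * softmax (fun j => a * vAux p q τ j) i :=
        Finset.sum_congr rfl fun i _ => by ring
      have e2 : ∑ i, a * (-vAux p q τ i * softmax (fun j => -(a * vAux p q τ j)) i)
          = -∑ i, (a * vAux p q τ i) * softmax (fun j => -(a * vAux p q τ j)) i := by
        rw [← Finset.sum_neg_distrib]
        exact Finset.sum_congr rfl fun i _ => by ring
      rw [e1, e2]
      linarith [hkey]
    exact le_of_mul_le_mul_left hmul ha
  have shift : (∫ τ in π..(2 * π), fAux p q a τ)
      = ∫ τ in (0:ℝ)..π, fAux p q a (τ + π) := by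
    rw [intervalIntegral.integral_comp_add_right]
    congr 1 <;> ring
  have split : (∫ τ in (0:ℝ)..(2 * π), fAux p q a τ)
      = (∫ τ in (0:ℝ)..π, fAux p q a τ) + ∫ τ in π..(2 * π), fAux p q a τ :=
    (intervalIntegral.integral_add_adjacent_intervals (hint 0 π) (hint π (2 * π))).symm
  have hint2 : IntervalIntegrable (fun τ => fAux p q a (τ + π)) MeasureTheory.volume 0 π := by
    apply Continuous.intervalIntegrable
    exact hc.comp (by continuity)
  rw [split, shift, ← intervalIntegral.integral_add (hint 0 π) hint2]
  exact intervalIntegral.integral_nonneg Real.pi_nonneg fun τ _ => hpt τ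

end main

theorem avg_reward_sinusoid (n : ℕ) (pbar qbar : Fin n → ℝ) (a φ : ℝ) (ha : 0 < a) :
    ((1 / (2 * π)) * ∫ u in (0:ℝ)..(2 * π),
        ∑ i, (Real.sin u * pbar i + Real.cos u * qbar i) *
          softmax (a • (Real.sin (u - φ) • pbar + Real.cos (u - φ) • qbar)) i)
      = Real.cos φ *
        ((1 / (2 * π)) * ∫ τ in (0:ℝ)..(2 * π),
          ∑ i, (Real.sin τ * pbar i + Real.cos τ * qbar i) *
            softmax (a • (Real.sin τ • pbar + Real.cos τ • qbar)) i) ∧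
    0 ≤ (1 / (2 * π)) * ∫ τ in (0:ℝ)..(2 * π),
          ∑ i, (Real.sin τ * pbar i + Real.cos τ * qbar i) *
            softmax (a • (Real.sin τ • pbar + Real.cos τ • qbar)) i := by
  have hInt : ∀ τ : ℝ, (∑ i, (Real.sin τ * pbar i + Real.cos τ * qbar i) *
      softmax (a • (Real.sin τ • pbar + Real.cos τ • qbar)) i) = fAux pbar qbar a τ := by
    intro τ
    rw [smul_eq_vAux]
    simp only [fAux, vAux]
  have hLHS : ∀ u : ℝ, (∑ i, (Real.sin u * pbar i + Real.cos u * qbar i) *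
      softmax (a • (Real.sin (u - φ) • pbar + Real.cos (u - φ) • qbar)) i)
      = Real.cos φ * fAux pbar qbar a (u - φ) + Real.sin φ * gAux pbar qbar a (u - φ) := by
    intro u
    rw [smul_eq_vAux, fAux, gAux, Finset.mul_sum, Finset.mul_sum, ← Finset.sum_add_distrib]
    refine Finset.sum_congr rfl fun i _ => ?_
    have h1 : Real.sin u = Real.sin (u - φ) * Real.cos φ + Real.cos (u - φ) * Real.sin φ := by
      rw [← Real.sin_add, sub_add_cancel]
    have h2 : Real.cos u = Real.cos (u - φ) * Real.cos φ - Real.sin (u - φ) * Real.sin φ := by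
      rw [← Real.cos_add, sub_add_cancel]
    rw [h1, h2]
    simp only [vAux]
    ring
  have hfc := fAux_continuous pbar qbar a
  have hgc := gAux_continuous pbar qbar a
  have hIf : (∫ u in (0:ℝ)..(2 * π), fAux pbar qbar a (u - φ))
      = ∫ τ in (0:ℝ)..(2 * π), fAux pbar qbar a τ := by
    rw [intervalIntegral.integral_comp_sub_right]
    have := (fAux_periodic pbar qbar a).intervalIntegral_add_eq (0 - φ) 0
    rw [zero_add] at this
    rw [show (2 * π - φ) = 0 - φ + 2 * π by ring, this]
  have hIg : (∫ u in (0:ℝ)..(2 * π), gAux pbar qbar a (u - φ)) = 0 := by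
    rw [intervalIntegral.integral_comp_sub_right]
    have := (gAux_periodic pbar qbar a).intervalIntegral_add_eq (0 - φ) 0
    rw [zero_add] at this
    rw [show (2 * π - φ) = 0 - φ + 2 * π by ring, this]
    exact integral_gAux_eq_zero pbar qbar a ha.ne'
  have hmain : (∫ u in (0:ℝ)..(2 * π),
      ∑ i, (Real.sin u * pbar i + Real.cos u * qbar i) *
        softmax (a • (Real.sin (u - φ) • pbar + Real.cos (u - φ) • qbar)) i)
      = Real.cos φ * ∫ τ in (0:ℝ)..(2 * π), fAux pbar qbar a τ := by
    rw [intervalIntegral.integral_congr (g := fun u =>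
      Real.cos φ * fAux pbar qbar a (u - φ) + Real.sin φ * gAux pbar qbar a (u - φ))
      (fun u _ => hLHS u)]
    have hi1 : IntervalIntegrable (fun u => Real.cos φ * fAux pbar qbar a (u - φ))
        MeasureTheory.volume 0 (2 * π) := by
      apply Continuous.intervalIntegrable
      exact continuous_const.mul (hfc.comp (by continuity))
    have hi2 : IntervalIntegrable (fun u => Real.sin φ * gAux pbar qbar a (u - φ))
        MeasureTheory.volume 0 (2 * π) := by
      apply Continuous.intervalIntegrable
      exact continuous_const.mul (hgc.comp (by continuity))
    rw [intervalIntegral.integral_add hi1 hi2]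
    rw [intervalIntegral.integral_const_mul, intervalIntegral.integral_const_mul, hIf, hIg]
    ring
  constructor
  · simp only [hInt]
    rw [hmain]
    ring
  · simp only [hInt]
    have := integral_fAux_nonneg pbar qbar a ha
    have hpi : 0 ≤ 1 / (2 * π) := by positivity
    exact mul_nonneg hpi this
end
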